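/- arXiv:2507.11766 — 2 statements merged into one kernel-verified Lean document; each statement's English description precedes it below -/
import Mathlib

section
/- Choi–Kraus theorem: a linear map Λ from M_n(ℂ) to M_m(ℂ) is completely positive if and only if there exist matrices A_1, …, A_{n·m} (each of size m × n, i.e. in Matrix (Fin m) (Fin n) ℂ) such that Λ(X) = Σ_{k=1}^{n·m} A_k X A_kᴴ for all X ∈ M_n(ℂ). -/
open scoped Kronecker ComplexOrder Matrix

/-- The Choi matrix of a linear map `Λ : M_n(ℂ) → M_m(ℂ)`:
`C(Λ) = ∑ i j, Λ(E i j) ⊗ₖ E i j`, a matrix indexed by `Fin m × Fin n`. -/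
noncomputable def choi {n m : ℕ}
    (Λ : Matrix (Fin n) (Fin n) ℂ →ₗ[ℂ] Matrix (Fin m) (Fin m) ℂ) :
    Matrix (Fin m × Fin n) (Fin m × Fin n) ℂ :=
  ∑ i : Fin n, ∑ j : Fin n,
    (Λ (Matrix.single i j 1)) ⊗ₖ (Matrix.single i j 1)

/-- `Λ ⊗ id_N` : the unique linear map with `(Λ ⊗ id_N)(A ⊗ₖ B) = Λ(A) ⊗ₖ B`,
written out explicitly. -/
noncomputable def tensorId {n m : ℕ}
    (Λ : Matrix (Fin n) (Fin n) ℂ →ₗ[ℂ] Matrix (Fin m) (Fin m) ℂ) (N : ℕ)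
    (M : Matrix (Fin n × Fin N) (Fin n × Fin N) ℂ) :
    Matrix (Fin m × Fin N) (Fin m × Fin N) ℂ :=
  Matrix.of fun p q => Λ (Matrix.of fun i j => M (i, p.2) (j, q.2)) p.1 q.1

/-- `Λ` is `N`-positive: `Λ ⊗ id_N` maps PSD matrices to PSD matrices. -/
def NPos {n m : ℕ}
    (Λ : Matrix (Fin n) (Fin n) ℂ →ₗ[ℂ] Matrix (Fin m) (Fin m) ℂ) (N : ℕ) : Prop :=
  ∀ M : Matrix (Fin n × Fin N) (Fin n × Fin N) ℂ,
    M.PosSemidef → (tensorId Λ N M).PosSemidef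

/-- `Λ` is completely positive: `N`-positive for every `N ≥ 1`. -/
def CP {n m : ℕ}
    (Λ : Matrix (Fin n) (Fin n) ℂ →ₗ[ℂ] Matrix (Fin m) (Fin m) ℂ) : Prop :=
  ∀ N : ℕ, 1 ≤ N → NPos Λ N

open Matrix

lemma choi_apply' {n m : ℕ}
    (Λ : Matrix (Fin n) (Fin n) ℂ →ₗ[ℂ] Matrix (Fin m) (Fin m) ℂ)
    (a c : Fin m) (b d : Fin n) :
    choi Λ (a, b) (c, d) = Λ (Matrix.single b d 1) a c := by
  simp [choi, Matrix.sum_apply, single, ite_and, mul_ite,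
    Finset.sum_ite_eq, Finset.sum_ite_eq']

/-- Maximally entangled (unnormalized) matrix. -/
noncomputable def ent (n : ℕ) : Matrix (Fin n × Fin n) (Fin n × Fin n) ℂ :=
  Matrix.of fun p q =>
    (if p.1 = p.2 then (1:ℂ) else 0) * (if q.1 = q.2 then 1 else 0)

lemma ent_posSemidef (n : ℕ) : (ent n).PosSemidef := by
  rw [posSemidef_iff_dotProduct_mulVec]
  constructor
  · ext p q
    simp only [ent, conjTranspose_apply, of_apply, mul_ite, mul_one, mul_zero,
      apply_ite (starRingEnd ℂ), _root_.map_one, _root_.map_zero]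
    split_ifs <;> simp
  · intro x
    have h : star x ⬝ᵥ (ent n *ᵥ x)
        = star (∑ a : Fin n, x (a, a)) * (∑ a : Fin n, x (a, a)) := by
      simp only [dotProduct, mulVec, ent, of_apply, Pi.star_apply, mul_assoc,
        ← Finset.mul_sum]
      simp only [Fintype.sum_prod_type, ite_mul, one_mul, zero_mul, mul_ite, mul_zero,
        Finset.sum_ite_eq, Finset.sum_ite_eq', Finset.mem_univ, if_true]
      rw [← Finset.sum_mul, ← star_sum]
    rw [h]
    exact star_mul_self_nonneg _

lemma tensorId_ent {n m : ℕ}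
    (Λ : Matrix (Fin n) (Fin n) ℂ →ₗ[ℂ] Matrix (Fin m) (Fin m) ℂ) :
    tensorId Λ n (ent n) = choi Λ := by
  ext ⟨a, b⟩ ⟨c, d⟩
  rw [choi_apply']
  simp only [tensorId, of_apply]
  have h : (Matrix.of fun i j => ent n (i, b) (j, d))
      = Matrix.single b d (1:ℂ) := by
    ext i j
    simp only [of_apply, ent, single]
    split_ifs <;> simp_all
  rw [h]

lemma lam_entry_eq {n m : ℕ}
    (Λ : Matrix (Fin n) (Fin n) ℂ →ₗ[ℂ] Matrix (Fin m) (Fin m) ℂ)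
    (X : Matrix (Fin n) (Fin n) ℂ) (a c : Fin m) :
    Λ X a c = ∑ b : Fin n, ∑ d : Fin n,
      X b d * Λ (Matrix.single b d 1) a c := by
  conv_lhs => rw [matrix_eq_sum_single X]
  rw [map_sum, Matrix.sum_apply]
  refine Finset.sum_congr rfl fun b _ => ?_
  rw [map_sum, Matrix.sum_apply]
  refine Finset.sum_congr rfl fun d _ => ?_
  rw [show Matrix.single b d (X b d) = X b d • Matrix.single b d 1 by
    rw [smul_single, smul_eq_mul, mul_one], Λ.map_smul]
  simp

lemma kraus_of_choi_psd {n m : ℕ}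
    (Λ : Matrix (Fin n) (Fin n) ℂ →ₗ[ℂ] Matrix (Fin m) (Fin m) ℂ)
    (hC : (choi Λ).PosSemidef) :
    ∃ A : Fin (n * m) → Matrix (Fin m) (Fin n) ℂ,
      ∀ X : Matrix (Fin n) (Fin n) ℂ,
        Λ X = ∑ k : Fin (n * m), A k * X * (A k)ᴴ := by
  obtain ⟨B, hB⟩ : ∃ B : Matrix (Fin m × Fin n) (Fin m × Fin n) ℂ, choi Λ = Bᴴ * B := by
    open scoped MatrixOrder in
    exact CStarAlgebra.nonneg_iff_eq_star_mul_self.mp hC.nonneg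
  let e : Fin (n * m) ≃ Fin m × Fin n :=
    (finCongr (Nat.mul_comm n m)).trans finProdFinEquiv.symm
  refine ⟨fun k => Matrix.of fun a b => star (B (e k) (a, b)), fun X => ?_⟩
  ext a c
  rw [lam_entry_eq]
  have key : ∀ b d : Fin n, Λ (Matrix.single b d 1) a c
      = ∑ p : Fin m × Fin n, star (B p (a, b)) * B p (c, d) := by
    intro b d
    rw [← choi_apply', hB]
    simp [Matrix.mul_apply, conjTranspose_apply]
  simp only [Matrix.sum_apply, Matrix.mul_apply, conjTranspose_apply, of_apply, key,
    star_star]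
  rw [Equiv.sum_comp e (fun p => ∑ d : Fin n,
      (∑ b : Fin n, star (B p (a, b)) * X b d) * B p (c, d))]
  simp only [Finset.mul_sum, Finset.sum_mul]
  calc ∑ b : Fin n, ∑ d : Fin n, ∑ p : Fin m × Fin n,
        X b d * (star (B p (a, b)) * B p (c, d))
      = ∑ b : Fin n, ∑ p : Fin m × Fin n, ∑ d : Fin n,
        X b d * (star (B p (a, b)) * B p (c, d)) :=
        Finset.sum_congr rfl fun _ _ => Finset.sum_comm
    _ = ∑ p : Fin m × Fin n, ∑ b : Fin n, ∑ d : Fin n,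
        X b d * (star (B p (a, b)) * B p (c, d)) := Finset.sum_comm
    _ = ∑ p : Fin m × Fin n, ∑ d : Fin n, ∑ b : Fin n,
        star (B p (a, b)) * X b d * B p (c, d) := by
        refine Finset.sum_congr rfl fun p _ => Finset.sum_comm.trans ?_
        refine Finset.sum_congr rfl fun d _ => Finset.sum_congr rfl fun b _ => by ring

lemma kraus_npos {n m : ℕ} (N : ℕ)
    (Λ : Matrix (Fin n) (Fin n) ℂ →ₗ[ℂ] Matrix (Fin m) (Fin m) ℂ)
    (A : Fin (n * m) → Matrix (Fin m) (Fin n) ℂ)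
    (hA : ∀ X : Matrix (Fin n) (Fin n) ℂ,
      Λ X = ∑ k : Fin (n * m), A k * X * (A k)ᴴ) : NPos Λ N := by
  intro M hM
  have key : tensorId Λ N M = ∑ k : Fin (n * m),
      (A k ⊗ₖ (1 : Matrix (Fin N) (Fin N) ℂ)) * M *
        (A k ⊗ₖ (1 : Matrix (Fin N) (Fin N) ℂ))ᴴ := by
    ext ⟨p1, p2⟩ ⟨q1, q2⟩
    simp only [tensorId, of_apply, hA, Matrix.sum_apply]
    refine Finset.sum_congr rfl fun k _ => ?_
    simp only [Matrix.mul_apply, conjTranspose_apply, kroneckerMap_apply, of_apply,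
      Fintype.sum_prod_type, one_apply, mul_ite, mul_one, mul_zero, ite_mul, zero_mul,
      one_mul, apply_ite (star : ℂ → ℂ), star_one, star_zero, Finset.sum_ite_eq, Finset.sum_ite_eq',
      Finset.mem_univ, if_true, star_mul']
  rw [key]
  refine Finset.sum_induction _ _ (fun a b ha hb => ha.add hb) PosSemidef.zero ?_
  exact fun k _ => hM.mul_mul_conjTranspose_same _

/-- Choi–Kraus: `Λ` is completely positive iff it has a Kraus presentation
`Λ(X) = ∑_{k=1}^{n·m} A_k X A_kᴴ` with `A_k ∈ Matrix (Fin m) (Fin n) ℂ`. -/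
theorem cp_iff_kraus {n m : ℕ}
    (Λ : Matrix (Fin n) (Fin n) ℂ →ₗ[ℂ] Matrix (Fin m) (Fin m) ℂ) :
    CP Λ ↔ ∃ A : Fin (n * m) → Matrix (Fin m) (Fin n) ℂ,
      ∀ X : Matrix (Fin n) (Fin n) ℂ, Λ X = ∑ k : Fin (n * m), A k * X * (A k)ᴴ := by
  constructor
  · intro hCP
    rcases Nat.eq_zero_or_pos n with hn | hn
    · subst hn
      refine ⟨fun _ => 0, fun X => ?_⟩
      rw [Subsingleton.elim X 0, map_zero]
      simp
    · have hpsd : (choi Λ).PosSemidef := by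
        have h := hCP n hn (ent n) (ent_posSemidef n)
        rwa [tensorId_ent] at h
      exact kraus_of_choi_psd Λ hpsd
  · rintro ⟨A, hA⟩ N _
    exact kraus_npos N Λ A hA
end

section
/- If a linear map Λ from M_n(ℂ) to M_m(ℂ) is N-positive for N = min(n, m), then Λ is completely positive. -/
open scoped Kronecker ComplexOrder

/-! ### Auxiliary lemmas -/
open Matrix

section Aux

variable {n m : ℕ} (Λ : Matrix (Fin n) (Fin n) ℂ →ₗ[ℂ] Matrix (Fin m) (Fin m) ℂ)

lemma choi_apply (p q : Fin m) (i j : Fin n) :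
    choi Λ (p, i) (q, j) = Λ (Matrix.single i j 1) p q := by
  classical
  simp only [choi, Matrix.sum_apply, Matrix.kroneckerMap_apply]
  rw [Finset.sum_eq_single i, Finset.sum_eq_single j]
  · simp [Matrix.single]
  · intro b _ hb; simp [Matrix.single, hb]
  · simp
  · intro b _ hb
    rw [Finset.sum_eq_zero]
    intro c _
    simp [Matrix.single, hb]
  · simp

lemma lam_entry (X : Matrix (Fin n) (Fin n) ℂ) (p q : Fin m) :
    Λ X p q = ∑ i : Fin n, ∑ j : Fin n, X i j * choi Λ (p, i) (q, j) := by
  classical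
  conv_lhs => rw [Matrix.matrix_eq_sum_single X]
  simp only [map_sum, Matrix.sum_apply]
  refine Finset.sum_congr rfl fun i _ => Finset.sum_congr rfl fun j _ => ?_
  rw [choi_apply]
  have : Matrix.single i j (X i j) = X i j • Matrix.single i j 1 := by
    ext a b
    simp only [Matrix.single, Matrix.smul_apply, Matrix.of_apply, smul_eq_mul]
    split <;> simp
  rw [this, _root_.map_smul, Matrix.smul_apply, smul_eq_mul]

lemma tensorId_entry (N : ℕ) (M : Matrix (Fin n × Fin N) (Fin n × Fin N) ℂ)
    (a b : Fin m × Fin N) :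
    tensorId Λ N M a b
      = ∑ i : Fin n, ∑ j : Fin n, M (i, a.2) (j, b.2) * choi Λ (a.1, i) (b.1, j) := by
  simp only [tensorId, Matrix.of_apply]
  rw [lam_entry]
  simp

/-- generic reindexing: merge a pair-sum differently -/
lemma swap_pair {I J K : Type*} [Fintype I] [Fintype J] [Fintype K]
    (f : I → J → K → ℂ) :
    ∑ a : I × J, ∑ k : K, f a.1 a.2 k = ∑ b : I × K, ∑ j : J, f b.1 j b.2 := by
  rw [Fintype.sum_prod_type, Fintype.sum_prod_type]
  exact Finset.sum_congr rfl fun i _ => Finset.sum_comm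

/-- Quadratic form of `tensorId` on a rank-one `M` equals a quadratic form of the
Choi matrix. -/
lemma key (N : ℕ) (x : Fin n × Fin N → ℂ) (w : Fin m × Fin N → ℂ) :
    star w ⬝ᵥ (tensorId Λ N (Matrix.of fun a b => x a * star (x b))) *ᵥ w
      = star (fun a : Fin m × Fin n => ∑ t : Fin N, w (a.1, t) * star (x (a.2, t)))
          ⬝ᵥ choi Λ *ᵥ (fun a : Fin m × Fin n => ∑ t : Fin N, w (a.1, t) * star (x (a.2, t))) := by
  classical
  have step1 : star w ⬝ᵥ (tensorId Λ N (Matrix.of fun a b => x a * star (x b))) *ᵥ w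
      = ∑ a : Fin m × Fin N, ∑ b : Fin m × Fin N, ∑ i : Fin n, ∑ j : Fin n,
          star (w a) * x (i, a.2) * choi Λ (a.1, i) (b.1, j) * star (x (j, b.2)) * w b := by
    simp only [dotProduct, Matrix.mulVec, Pi.star_apply, tensorId_entry,
      Matrix.of_apply, Finset.mul_sum, Finset.sum_mul]
    exact Finset.sum_congr rfl fun a _ => Finset.sum_congr rfl fun b _ =>
      Finset.sum_congr rfl fun i _ => Finset.sum_congr rfl fun j _ => by ring
  have step2 : (∑ a : Fin m × Fin N, ∑ b : Fin m × Fin N, ∑ i : Fin n, ∑ j : Fin n,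
          star (w a) * x (i, a.2) * choi Λ (a.1, i) (b.1, j) * star (x (j, b.2)) * w b)
      = ∑ a : Fin m × Fin N, ∑ i : Fin n, ∑ b : Fin m × Fin N, ∑ j : Fin n,
          star (w a) * x (i, a.2) * choi Λ (a.1, i) (b.1, j) * star (x (j, b.2)) * w b :=
    Finset.sum_congr rfl fun a _ => Finset.sum_comm
  have step3 : (∑ a : Fin m × Fin N, ∑ i : Fin n, ∑ b : Fin m × Fin N, ∑ j : Fin n,
          star (w a) * x (i, a.2) * choi Λ (a.1, i) (b.1, j) * star (x (j, b.2)) * w b)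
      = ∑ a' : Fin m × Fin n, ∑ s : Fin N, ∑ b : Fin m × Fin N, ∑ j : Fin n,
          star (w (a'.1, s)) * x (a'.2, s) * choi Λ (a'.1, a'.2) (b.1, j) * star (x (j, b.2)) * w b :=
    swap_pair (fun p s i => ∑ b : Fin m × Fin N, ∑ j : Fin n,
      star (w (p, s)) * x (i, s) * choi Λ (p, i) (b.1, j) * star (x (j, b.2)) * w b)
  have step4 : (∑ a' : Fin m × Fin n, ∑ s : Fin N, ∑ b : Fin m × Fin N, ∑ j : Fin n,
          star (w (a'.1, s)) * x (a'.2, s) * choi Λ (a'.1, a'.2) (b.1, j) * star (x (j, b.2)) * w b)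
      = ∑ a' : Fin m × Fin n, ∑ s : Fin N, ∑ b' : Fin m × Fin n, ∑ t : Fin N,
          star (w (a'.1, s)) * x (a'.2, s) * choi Λ (a'.1, a'.2) (b'.1, b'.2) * star (x (b'.2, t)) * w (b'.1, t) :=
    Finset.sum_congr rfl fun a' _ => Finset.sum_congr rfl fun s _ =>
      swap_pair (fun q t j =>
        star (w (a'.1, s)) * x (a'.2, s) * choi Λ (a'.1, a'.2) (q, j) * star (x (j, t)) * w (q, t))
  have step5 : (∑ a' : Fin m × Fin n, ∑ s : Fin N, ∑ b' : Fin m × Fin n, ∑ t : Fin N,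
          star (w (a'.1, s)) * x (a'.2, s) * choi Λ (a'.1, a'.2) (b'.1, b'.2) * star (x (b'.2, t)) * w (b'.1, t))
      = star (fun a : Fin m × Fin n => ∑ t : Fin N, w (a.1, t) * star (x (a.2, t)))
          ⬝ᵥ choi Λ *ᵥ (fun a : Fin m × Fin n => ∑ t : Fin N, w (a.1, t) * star (x (a.2, t))) := by
    simp only [dotProduct, Matrix.mulVec, Pi.star_apply, star_sum, star_mul',
      star_star, Finset.mul_sum, Finset.sum_mul]
    refine Finset.sum_congr rfl fun a' _ => ?_
    rw [Finset.sum_comm]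
    refine Finset.sum_congr rfl fun b' _ => ?_
    rw [Finset.sum_comm]
    refine Finset.sum_congr rfl fun s _ => Finset.sum_congr rfl fun t _ => by ring
  rw [step1, step2, step3, step4, step5]

lemma isHermitian_of_nonneg {k : Type*} [Fintype k] [DecidableEq k] (A : Matrix k k ℂ)
    (h : ∀ x : k → ℂ, 0 ≤ star x ⬝ᵥ A *ᵥ x) : A.IsHermitian := by
  have hsa : ∀ x : k → ℂ, star (star x ⬝ᵥ A *ᵥ x) = star x ⬝ᵥ A *ᵥ x :=
    fun x => IsSelfAdjoint.of_nonneg (h x)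
  have ev : ∀ (c d : ℂ) (i j : k), i ≠ j →
      star (fun a => (if a = i then c else 0) + (if a = j then d else 0) : k → ℂ) ⬝ᵥ
        A *ᵥ (fun a => (if a = i then c else 0) + (if a = j then d else 0))
      = star c * c * A i i + star c * d * A i j + star d * c * A j i
          + star d * d * A j j := by
    intro c d i j hij
    simp only [dotProduct, Matrix.mulVec, Pi.star_apply, star_add,
      apply_ite (star : ℂ → ℂ), star_zero, add_mul, mul_add, ite_mul, mul_ite,
      zero_mul, mul_zero, Finset.sum_add_distrib, Finset.sum_ite_eq',
      Finset.mem_univ, if_true, if_neg hij, if_neg (Ne.symm hij)]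
    ring
  have diag : ∀ i : k, (starRingEnd ℂ) (A i i) = A i i := by
    intro i
    have := hsa (fun a => if a = i then 1 else 0)
    simpa [dotProduct, Matrix.mulVec, Pi.star_apply,
      apply_ite (star : ℂ → ℂ), ite_mul, mul_ite, zero_mul, mul_zero,
      Finset.sum_ite_eq', Finset.mem_univ] using this
  show Aᴴ = A
  ext i j
  rcases eq_or_ne j i with rfl | hij
  · simpa [Matrix.conjTranspose_apply] using diag j
  · have h1 := hsa (fun a => (if a = j then (1:ℂ) else 0) + (if a = i then 1 else 0))
    have h2 := hsa (fun a => (if a = j then (1:ℂ) else 0) + (if a = i then Complex.I else 0))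
    rw [ev 1 1 j i hij] at h1
    rw [ev 1 Complex.I j i hij] at h2
    simp only [star_add, star_mul', star_one, one_mul, mul_one, Complex.star_def,
      map_neg, _root_.map_mul, Complex.conj_I, neg_mul, mul_neg, neg_neg] at h1 h2
    have dI : (starRingEnd ℂ) (A i i) = A i i := diag i
    have dJ : (starRingEnd ℂ) (A j j) = A j j := diag j
    rw [Matrix.conjTranspose_apply, RCLike.star_def]
    linear_combination (h1 - dJ - dI)/2 + (Complex.I/2) * (h2 - dJ - dI)
      + (((starRingEnd ℂ) (A j i) - (starRingEnd ℂ) (A i j) + A j i - A i j)/2) * Complex.I_mul_I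
      + ((Complex.I + Complex.I^3)/2) * dI


lemma posSemidef_of_nonneg {k : Type*} [Fintype k] [DecidableEq k] (A : Matrix k k ℂ)
    (h : ∀ x : k → ℂ, 0 ≤ star x ⬝ᵥ A *ᵥ x) : A.PosSemidef :=
  Matrix.PosSemidef.of_dotProduct_mulVec_nonneg (isHermitian_of_nonneg A h) h

lemma rankOne_posSemidef {k : Type*} [Fintype k] [DecidableEq k] (x : k → ℂ) :
    (Matrix.of fun a b => x a * star (x b)).PosSemidef := by
  have : (Matrix.of fun a b => x a * star (x b))
      = (Matrix.of fun (_ : Unit) a => star (x a))ᴴ * (Matrix.of fun (_ : Unit) a => star (x a)) := by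
    ext a b
    simp [Matrix.mul_apply, mul_comm]
  rw [this]
  exact Matrix.posSemidef_conjTranspose_mul_self _

lemma tensorId_sum {R : Type*} [Fintype R] (N : ℕ)
    (f : R → Matrix (Fin n × Fin N) (Fin n × Fin N) ℂ) :
    tensorId Λ N (∑ r : R, f r) = ∑ r : R, tensorId Λ N (f r) := by
  ext a b
  simp only [tensorId, Matrix.of_apply, Matrix.sum_apply]
  have : (Matrix.of fun i j => ∑ r : R, f r (i, a.2) (j, b.2))
      = ∑ r : R, Matrix.of (fun i j => f r (i, a.2) (j, b.2)) := by
    ext i j; simp [Matrix.sum_apply]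
  rw [this, map_sum]
  simp [Matrix.sum_apply]

lemma dot_sum {k R : Type*} [Fintype k] [Fintype R] (A : R → Matrix k k ℂ) (w : k → ℂ) :
    star w ⬝ᵥ (∑ r : R, A r) *ᵥ w = ∑ r : R, star w ⬝ᵥ (A r) *ᵥ w := by
  simp only [dotProduct, Matrix.mulVec, Matrix.sum_apply, Finset.sum_mul,
    Finset.mul_sum]
  calc (∑ a : k, ∑ b : k, ∑ r : R, star w a * (A r a b * w b))
      = ∑ a : k, ∑ r : R, ∑ b : k, star w a * (A r a b * w b) :=
        Finset.sum_congr rfl fun a _ => Finset.sum_comm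
    _ = ∑ r : R, ∑ a : k, ∑ b : k, star w a * (A r a b * w b) := Finset.sum_comm

lemma choi_posSemidef (h : NPos Λ (min n m)) : (choi Λ).PosSemidef := by
  apply posSemidef_of_nonneg
  intro v
  rcases le_total n m with hnm | hmn
  · set e : Fin (min n m) ≃ Fin n := finCongr (min_eq_left hnm) with he
    set x : Fin n × Fin (min n m) → ℂ :=
      fun a => if a.1 = e a.2 then 1 else 0 with hx
    set w : Fin m × Fin (min n m) → ℂ := fun a => v (a.1, e a.2) with hw
    have hu : (fun a : Fin m × Fin n => ∑ t : Fin (min n m), w (a.1, t) * star (x (a.2, t))) = v := by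
      funext a
      have := Equiv.sum_comp e (fun j : Fin n =>
        v (a.1, j) * star (if a.2 = j then (1 : ℂ) else 0))
      simp only [hx, hw]
      rw [this]
      simp [apply_ite (star : ℂ → ℂ), Finset.sum_ite_eq, Finset.mem_univ]
    have hkey := key Λ (min n m) x w
    rw [hu] at hkey
    rw [← hkey]
    exact (h _ (rankOne_posSemidef x)).dotProduct_mulVec_nonneg w
  · set e : Fin (min n m) ≃ Fin m := finCongr (min_eq_right hmn) with he
    set x : Fin n × Fin (min n m) → ℂ :=
      fun a => star (v (e a.2, a.1)) with hx
    set w : Fin m × Fin (min n m) → ℂ :=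
      fun a => if a.1 = e a.2 then 1 else 0 with hw
    have hu : (fun a : Fin m × Fin n => ∑ t : Fin (min n m), w (a.1, t) * star (x (a.2, t))) = v := by
      funext a
      have := Equiv.sum_comp e (fun q : Fin m =>
        (if a.1 = q then (1 : ℂ) else 0) * star (star (v (q, a.2))))
      simp only [hx, hw]
      rw [this]
      simp [star_star, Finset.sum_ite_eq, Finset.mem_univ]
    have hkey := key Λ (min n m) x w
    rw [hu] at hkey
    rw [← hkey]
    exact (h _ (rankOne_posSemidef x)).dotProduct_mulVec_nonneg w

end Aux

/-- if `Λ` is `min n m`-positive then it is completely positive. -/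
theorem cp_of_min_pos {n m : ℕ}
    (Λ : Matrix (Fin n) (Fin n) ℂ →ₗ[ℂ] Matrix (Fin m) (Fin m) ℂ)
    (h : NPos Λ (min n m)) : CP Λ := by
  have hc := choi_posSemidef Λ h
  intro N _ M hM
  obtain ⟨B, rfl⟩ : ∃ B : Matrix (Fin n × Fin N) (Fin n × Fin N) ℂ, M = Bᴴ * B := by
    classical
    open scoped MatrixOrder Matrix.Norms.L2Operator in
    obtain ⟨B, rfl⟩ := CStarAlgebra.nonneg_iff_eq_star_mul_self.mp hM.nonneg
    exact ⟨B, rfl⟩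
  apply posSemidef_of_nonneg
  intro w
  have hBB : (Bᴴ * B) = ∑ r : Fin n × Fin N,
      Matrix.of (fun a b => (fun c => star (B r c)) a * star ((fun c => star (B r c)) b)) := by
    ext a b
    simp [Matrix.mul_apply, Matrix.conjTranspose_apply, Matrix.sum_apply, star_star]
  rw [hBB, tensorId_sum, dot_sum]

  refine Finset.sum_nonneg fun r _ => ?_
  rw [key]
  exact hc.dotProduct_mulVec_nonneg _
end
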